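/- Let X be a type. Then any two nontrivial normal subgroups of the free group FreeGroup X have nontrivial intersection: if N, M are subgroups of FreeGroup X with N.Normal, M.Normal, N ≠ ⊥ and M ≠ ⊥, then N ⊓ M ≠ ⊥. -/

import Mathlib

open Function

/-- The canonical lift on the free group over `Unit`-like (subsingleton) types into
`Multiplicative ℤ` is injective when the base is a singleton. -/
private lemma freeGroup_unit_lift_injective {S : Type*} [Subsingleton S] (s : S) :
    Injective (FreeGroup.lift (fun _ : S => Multiplicative.ofAdd (1 : ℤ))) := by
  set ζ : FreeGroup S →* Multiplicative ℤ :=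
    FreeGroup.lift (fun _ : S => Multiplicative.ofAdd (1 : ℤ)) with hζ
  have key : ∀ x : FreeGroup S, (FreeGroup.of s) ^ (ζ x).toAdd = x := by
    intro x
    induction x with
    | C1 => simp
    | of a =>
        have ha : a = s := Subsingleton.elim a s
        rw [show (FreeGroup.of a : FreeGroup S) = FreeGroup.of s from ha ▸ rfl]
        simp [hζ]
    | inv_of a ih =>
        have ha : a = s := Subsingleton.elim a s
        rw [show (FreeGroup.of a : FreeGroup S) = FreeGroup.of s from ha ▸ rfl]
        simp [hζ]
    | mul x y ihx ihy =>
        rw [map_mul]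
        rw [toAdd_mul, zpow_add, ihx, ihy]
  intro x y hxy
  rw [← key x, ← key y, hxy]

/-- An abelian free group admits an injective homomorphism into `Multiplicative ℤ`. -/
private lemma free_comm_embeds_int {G : Type*} [Group G] [IsFreeGroup G]
    (hc : ∀ a b : G, a * b = b * a) :
    ∃ φ : G →* Multiplicative ℤ, Injective φ := by
  classical
  set S := IsFreeGroup.Generators G
  have e : G ≃* FreeGroup S := IsFreeGroup.toFreeGroup G
  -- the generator type is a subsingleton, since distinct free generators don't commute
  have hS : Subsingleton S := by
    constructor
    intro a b
    by_contra hab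
    -- map to a nonabelian group: permutations of Fin 3
    let f : S → Equiv.Perm (Fin 3) := fun x => if x = a then Equiv.swap 0 1 else Equiv.swap 1 2
    have hcomm : FreeGroup.of a * FreeGroup.of b = FreeGroup.of b * FreeGroup.of a := by
      have := hc (e.symm (FreeGroup.of a)) (e.symm (FreeGroup.of b))
      have := congrArg e this
      simpa using this
    have := congrArg (FreeGroup.lift f) hcomm
    simp only [map_mul, FreeGroup.lift_apply_of, f, if_pos rfl, if_neg (Ne.symm hab)] at this
    exact absurd this (by decide)
  rcases isEmpty_or_nonempty S with hS0 | hS1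
  · -- G is trivial
    have htriv : ∀ x : FreeGroup S, x = 1 := by
      intro x
      rw [← FreeGroup.toWord_inj, FreeGroup.toWord_one]
      rcases hw : x.toWord with _ | ⟨⟨a, _⟩, _⟩
      · rfl
      · exact (hS0.false a).elim
    refine ⟨1, fun x y _ => ?_⟩
    have : e x = e y := by rw [htriv (e x), htriv (e y)]
    exact e.injective this
  · obtain ⟨s⟩ := hS1
    refine ⟨(FreeGroup.lift (fun _ : S => Multiplicative.ofAdd (1 : ℤ))).comp e.toMonoidHom,
      fun x y hxy => ?_⟩
    exact e.injective (freeGroup_unit_lift_injective s hxy)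

theorem freeGroup_nontrivial_normal_subgroups_inf_ne_bot
    (X : Type*) (N M : Subgroup (FreeGroup X))
    (hN : N.Normal) (hM : M.Normal) (hNbot : N ≠ ⊥) (hMbot : M ≠ ⊥) :
    N ⊓ M ≠ ⊥ := by
  obtain ⟨⟨n, hnN⟩, hn1⟩ := Subgroup.ne_bot_iff_exists_ne_one.mp hNbot
  obtain ⟨⟨m, hmM⟩, hm1⟩ := Subgroup.ne_bot_iff_exists_ne_one.mp hMbot
  have hn1 : n ≠ 1 := by simpa [Subtype.ext_iff] using hn1
  have hm1 : m ≠ 1 := by simpa [Subtype.ext_iff] using hm1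
  rw [Subgroup.ne_bot_iff_exists_ne_one]
  by_cases hcom : n * m = m * n
  · -- n and m commute; the subgroup they generate is free and abelian, hence embeds in ℤ
    set H := Subgroup.closure ({n, m} : Set (FreeGroup X)) with hH
    have hnH : n ∈ H := Subgroup.subset_closure (by simp)
    have hmH : m ∈ H := Subgroup.subset_closure (by simp)
    have hcH : ∀ a b : H, a * b = b * a := by
      letI : CommGroup H := Subgroup.closureCommGroupOfComm (k := {n, m}) (by
        rintro x (rfl | rfl) y (rfl | rfl) <;> simp [hcom])
      exact fun a b => mul_comm a b
    obtain ⟨φ, hφ⟩ := free_comm_embeds_int hcH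
    set n' : H := ⟨n, hnH⟩
    set m' : H := ⟨m, hmH⟩
    have ha : (φ n').toAdd ≠ 0 := by
      simp only [ne_eq, toAdd_eq_zero]
      intro h
      exact hn1 (congrArg Subtype.val (hφ (h.trans (map_one φ).symm)))
    have hb : (φ m').toAdd ≠ 0 := by
      simp only [ne_eq, toAdd_eq_zero]
      intro h
      exact hm1 (congrArg Subtype.val (hφ (h.trans (map_one φ).symm)))
    set a : ℤ := (φ n').toAdd
    set b : ℤ := (φ m').toAdd
    have hkey : n' ^ b = m' ^ a := by
      apply hφ
      rw [map_zpow, map_zpow]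
      apply Multiplicative.toAdd.injective
      simp only [toAdd_zpow, smul_eq_mul]
      ring
    have hne : n' ^ b ≠ 1 := by
      intro h
      have h2 : b * a = 0 := by
        have h3 := congrArg φ h
        rw [map_zpow, map_one] at h3
        have h4 := congrArg Multiplicative.toAdd h3
        simpa [toAdd_zpow, smul_eq_mul, -toAdd_eq_zero] using h4
      rcases mul_eq_zero.mp h2 with h' | h'
      · exact hb h'
      · exact ha h'
    refine ⟨⟨n ^ b, ?_, ?_⟩, ?_⟩
    · exact N.zpow_mem hnN b
    · have : (n' ^ b : FreeGroup X) = (m' ^ a : FreeGroup X) := congrArg Subtype.val hkey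
      change n ^ b = m ^ a at this
      rw [this]
      exact M.zpow_mem hmM a
    · simp only [ne_eq, Subtype.ext_iff, OneMemClass.coe_one]
      intro h
      exact hne (Subtype.ext (by simpa [n'] using h))
  · -- the commutator is a nontrivial element of N ⊓ M
    refine ⟨⟨n * m * n⁻¹ * m⁻¹, ?_, ?_⟩, ?_⟩
    · have h1 : m * n⁻¹ * m⁻¹ ∈ N := hN.conj_mem _ (N.inv_mem hnN) m
      have := N.mul_mem hnN h1
      simpa [mul_assoc] using this
    · have h1 : n * m * n⁻¹ ∈ M := hM.conj_mem _ hmM n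
      exact M.mul_mem h1 (M.inv_mem hmM)
    · simp only [ne_eq, Subtype.ext_iff, OneMemClass.coe_one]
      intro h
      apply hcom
      have : n * m * n⁻¹ * m⁻¹ = 1 := by simpa using h
      group at this ⊢
      rw [← mul_inv_eq_one]
      group
      exact this
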